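/- Given points x^α, x^β in Σ_2 constructed as in the preceding context from distinct α, β ∈ {0,1}^ℕ with {j : α(j) ≠ β(j)} infinite, the lower distributional function satisfies Φ_{x^α,x^β}(δ) = 0 for every 0 < δ < 1; i.e., the pair (x^α, x^β) is extremal distributionally scrambled. -/

import Mathlib

open Filter

/-- Metric on Σ₂ = {0,1}^ℕ : d(u,v) = Σ_{i≥1} δ(u_i,v_i)/2^i (coordinates 0-indexed). -/
noncomputable def dist2 (u v : ℕ → Bool) : ℝ :=
  ∑' i : ℕ, if u i = v i then 0 else (1/2)^(i+1)

/-- The shift map. -/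
def shift (u : ℕ → Bool) : ℕ → Bool := fun n => u (n + 1)

/-- Binary complement of a word. -/
def wordCompl (B : List Bool) : List Bool := B.map (fun b => !b)

/-- Morse blocks: M_0 = 0, M_{i+1} = M_i followed by its complement. -/
def morseBlock : ℕ → List Bool
  | 0 => [false]
  | i + 1 => morseBlock i ++ wordCompl (morseBlock i)

/-- The Morse sequence, the limit of the Morse blocks. -/
def morse : ℕ → Bool := fun n => (morseBlock (n + 1)).getD n false

open Classical in
/-- Infinite concatenation of a sequence of (nonempty) blocks. -/
noncomputable def concatSeq (B : ℕ → List Bool) (k : ℕ) : Bool :=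
  if h : ∃ n, ∑ i ∈ Finset.range n, (B i).length ≤ k ∧
      k < ∑ i ∈ Finset.range (n + 1), (B i).length then
    (B h.choose).getD (k - ∑ i ∈ Finset.range h.choose, (B i).length) false
  else false

open Classical in
/-- Lower distributional function. -/
noncomputable def Phi (x y : ℕ → Bool) (δ : ℝ) : ℝ :=
  liminf (fun m : ℕ =>
    (((Finset.Ioo 0 m).filter (fun k => dist2 (shift^[k] x) (shift^[k] y) < δ)).card : ℝ) / m)
    atTop

open Classical in
/-- Upper distributional function. -/
noncomputable def PhiStar (x y : ℕ → Bool) (ε : ℝ) : ℝ :=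
  limsup (fun m : ℕ =>
    (((Finset.Ioo 0 m).filter (fun k => dist2 (shift^[k] x) (shift^[k] y) < ε)).card : ℝ) / m)
    atTop

/-- A Li-Yorke scrambled triple. -/
noncomputable def ScrTriple (x y z : ℕ → Bool) : Prop :=
  x ≠ y ∧ x ≠ z ∧ y ≠ z ∧
  liminf (fun k : ℕ => max (max (dist2 (shift^[k] x) (shift^[k] y))
      (dist2 (shift^[k] x) (shift^[k] z))) (dist2 (shift^[k] y) (shift^[k] z))) atTop = 0 ∧
  0 < limsup (fun k : ℕ => min (min (dist2 (shift^[k] x) (shift^[k] y))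
      (dist2 (shift^[k] x) (shift^[k] z))) (dist2 (shift^[k] y) (shift^[k] z))) atTop

/-- Concatenation of Morse blocks M_{a j}, complemented where `e j = true`. -/
noncomputable def blockPt (a : ℕ → ℕ) (e : ℕ → Bool) : ℕ → Bool :=
  concatSeq (fun j => if e j then wordCompl (morseBlock (a j)) else morseBlock (a j))

/-- A point occurring as in Theorem 2: odd-position blocks fixed, even-position blocks chosen by α. -/
noncomputable def xpt (a : ℕ → ℕ) (α : ℕ → Bool) : ℕ → Bool :=
  blockPt a (fun j => if j % 2 = 0 then α (j / 2) else false)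

/-- Cantor set predicate. -/
def IsCantorSet (C : Set (ℕ → Bool)) : Prop :=
  C.Nonempty ∧ IsCompact C ∧ Perfect C ∧ IsTotallyDisconnected C

/-- The Morse minimal set: orbit closure of the Morse sequence. -/
def morseMinimal : Set (ℕ → Bool) := closure {y | ∃ k : ℕ, y = shift^[k] morse}


lemma wordCompl_length (L : List Bool) : (wordCompl L).length = L.length :=
  List.length_map _

lemma morseBlock_length (i : ℕ) : (morseBlock i).length = 2^i := by
  induction i with
  | zero => rfl
  | succ n ih => simp [morseBlock, wordCompl_length, ih, pow_succ]; omega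

lemma wordCompl_getD (L : List Bool) (r : ℕ) (h : r < L.length) :
    (wordCompl L).getD r false = ! (L.getD r false) := by
  rw [List.getD_eq_getElem _ _ (by simpa [wordCompl_length] using h),
      List.getD_eq_getElem _ _ h]
  simp [wordCompl]

lemma geom_sum_half (N : ℕ) : ∑ i ∈ Finset.range N, (1/2:ℝ)^(i+1) = 1 - (1/2)^N := by
  induction N with
  | zero => simp
  | succ n ih => rw [Finset.sum_range_succ, ih]; ring

lemma summable_dist2 (u v : ℕ → Bool) :
    Summable (fun i : ℕ => if u i = v i then (0:ℝ) else (1/2)^(i+1)) := by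
  have hg : Summable (fun i : ℕ => (1/2:ℝ) * (1/2)^i) :=
    (summable_geometric_of_lt_one (by norm_num) (by norm_num : (1/2:ℝ) < 1)).mul_left (1/2)
  apply Summable.of_nonneg_of_le (fun i => ?_) (fun i => ?_) hg
  · split <;> positivity
  · split
    · positivity
    · rw [pow_succ]; ring_nf; exact le_refl _

lemma dist2_ge (u v : ℕ → Bool) (N : ℕ) (h : ∀ t < N, u t ≠ v t) :
    1 - (1/2:ℝ)^N ≤ dist2 u v := by
  have hs := summable_dist2 u v
  have h1 : ∑ i ∈ Finset.range N, (if u i = v i then (0:ℝ) else (1/2)^(i+1)) ≤ dist2 u v := by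
    apply hs.sum_le_tsum _ (fun i _ => by split <;> positivity)
  calc 1 - (1/2:ℝ)^N = ∑ i ∈ Finset.range N, (1/2:ℝ)^(i+1) := (geom_sum_half N).symm
    _ = ∑ i ∈ Finset.range N, (if u i = v i then (0:ℝ) else (1/2)^(i+1)) := by
        apply Finset.sum_congr rfl; intro i hi
        rw [if_neg (h i (Finset.mem_range.mp hi))]
    _ ≤ dist2 u v := h1

lemma concatSeq_eval (B : ℕ → List Bool) (n k : ℕ)
    (h1 : ∑ i ∈ Finset.range n, (B i).length ≤ k)
    (h2 : k < ∑ i ∈ Finset.range (n + 1), (B i).length) :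
    concatSeq B k = (B n).getD (k - ∑ i ∈ Finset.range n, (B i).length) false := by
  have hex : ∃ m, ∑ i ∈ Finset.range m, (B i).length ≤ k ∧
      k < ∑ i ∈ Finset.range (m + 1), (B i).length := ⟨n, h1, h2⟩
  rw [concatSeq, dif_pos hex]
  have hc := hex.choose_spec
  set m := hex.choose with hm
  have hmn : m = n := by
    by_contra hne
    rcases Nat.lt_or_ge m n with h | h
    · have : ∑ i ∈ Finset.range (m+1), (B i).length ≤ ∑ i ∈ Finset.range n, (B i).length :=
        Finset.sum_le_sum_of_subset (by simp [Finset.range_subset]; omega)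
      omega
    · have hlt : n < m := by omega
      have : ∑ i ∈ Finset.range (n+1), (B i).length ≤ ∑ i ∈ Finset.range m, (B i).length :=
        Finset.sum_le_sum_of_subset (by simp [Finset.range_subset]; omega)
      omega
  rw [hmn]

lemma block_length (a : ℕ → ℕ) (e : ℕ → Bool) (j : ℕ) :
    ((fun j => if e j then wordCompl (morseBlock (a j)) else morseBlock (a j)) j).length
      = 2 ^ (a j) := by
  simp only []
  split <;> simp [wordCompl_length, morseBlock_length]

lemma blockPt_eval (a : ℕ → ℕ) (e : ℕ → Bool) (n k : ℕ)
    (h1 : ∑ i ∈ Finset.range n, 2 ^ (a i) ≤ k)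
    (h2 : k < ∑ i ∈ Finset.range (n + 1), 2 ^ (a i)) :
    blockPt a e k = (if e n then wordCompl (morseBlock (a n)) else morseBlock (a n)).getD
      (k - ∑ i ∈ Finset.range n, 2 ^ (a i)) false := by
  have hlen : ∀ m, ∑ i ∈ Finset.range m,
      ((fun j => if e j then wordCompl (morseBlock (a j)) else morseBlock (a j)) i).length
      = ∑ i ∈ Finset.range m, 2 ^ (a i) := by
    intro m; exact Finset.sum_congr rfl (fun i _ => block_length a e i)
  rw [blockPt, concatSeq_eval _ n k (by rw [hlen]; exact h1) (by rw [hlen]; exact h2), hlen]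

lemma xpt_ne (a : ℕ → ℕ) (α β : ℕ → Bool) (j k : ℕ) (hj : α j ≠ β j)
    (h1 : ∑ i ∈ Finset.range (2*j), 2 ^ (a i) ≤ k)
    (h2 : k < ∑ i ∈ Finset.range (2*j + 1), 2 ^ (a i)) :
    xpt a α k ≠ xpt a β k := by
  have hmod : (2*j) % 2 = 0 := by omega
  have hdiv : (2*j) / 2 = j := by omega
  have hr : k - ∑ i ∈ Finset.range (2*j), 2 ^ (a i) < (morseBlock (a (2*j))).length := by
    rw [morseBlock_length]
    have := Finset.sum_range_succ (fun i => 2 ^ (a i)) (2*j)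
    omega
  have hA := blockPt_eval a (fun j' => if j' % 2 = 0 then α (j' / 2) else false) (2*j) k h1 h2
  have hB := blockPt_eval a (fun j' => if j' % 2 = 0 then β (j' / 2) else false) (2*j) k h1 h2
  rw [xpt, hA, xpt, hB]
  simp only [hmod, hdiv, if_pos rfl]
  have hkey := wordCompl_getD (morseBlock (a (2*j))) (k - ∑ i ∈ Finset.range (2*j), 2 ^ (a i)) hr
  cases hα : α j <;> cases hβ : β j <;>
    simp only [hα, hβ, Bool.false_eq_true, if_false, if_true, hkey] <;>
    first
      | (exact absurd rfl (by rw [hα, hβ] at hj; exact hj))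
      | (intro hcontra; simp [Bool.eq_not_self, Bool.not_eq_self] at hcontra)

lemma shift_iter (u : ℕ → Bool) (k n : ℕ) : shift^[k] u n = u (n + k) := by
  induction k generalizing n with
  | zero => simp
  | succ m ih =>
    rw [Function.iterate_succ_apply']
    simp only [shift, ih]
    ring_nf

lemma sum_pow_lt (a : ℕ → ℕ) (hmono : StrictMono a) (j : ℕ) :
    ∑ i ∈ Finset.range (j+1), 2 ^ (a i) < 2 ^ (a j + 1) := by
  induction j with
  | zero =>
    rw [show (0+1) = 1 from rfl, Finset.sum_range_one, pow_succ]
    have : 0 < (2:ℕ) ^ (a 0) := Nat.pow_pos (by norm_num)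
    omega
  | succ n ih =>
    rw [Finset.sum_range_succ]
    have h1 : a n + 1 ≤ a (n+1) := hmono (Nat.lt_succ_self n)
    have h2 : (2:ℕ) ^ (a n + 1) ≤ 2 ^ (a (n+1)) := Nat.pow_le_pow_right (by norm_num) h1
    have : (2:ℕ) ^ (a (n+1)) + 2 ^ (a (n+1)) = 2 ^ (a (n+1) + 1) := by rw [pow_succ]; ring
    omega

lemma gap_lemma (a : ℕ → ℕ) (hpos : ∀ n, 0 < a n)
    (hratio : Tendsto (fun n => (a n : ℝ) / (a (n + 1) : ℝ)) atTop (nhds 0)) (C : ℕ) :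
    ∀ᶠ n in atTop, a n + C ≤ a (n + 1) := by
  have h := hratio.eventually (gt_mem_nhds (show (0:ℝ) < 1/(C+1) by positivity))
  filter_upwards [h] with n hn
  have hp1 : (0:ℝ) < (a (n+1) : ℝ) := by exact_mod_cast hpos (n+1)
  rw [div_lt_div_iff₀ hp1 (by positivity)] at hn
  have hcast : (a n : ℝ) * (C+1) < (a (n+1) : ℝ) := by linarith
  have hnat : a n * (C+1) < a (n+1) := by exact_mod_cast hcast
  have h1 : 1 ≤ a n := hpos n
  nlinarith [hnat, h1]

lemma liminf_zero_aux (f : ℕ → ℝ) (h0 : ∀ m, 0 ≤ f m) (h1 : ∀ m, f m ≤ 1)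
    (hfreq : ∀ ε : ℝ, 0 < ε → ∃ᶠ m in atTop, f m ≤ ε) : liminf f atTop = 0 := by
  have hbd : IsBoundedUnder (· ≥ ·) atTop f := isBoundedUnder_of ⟨0, fun m => h0 m⟩
  have hub : IsBoundedUnder (· ≤ ·) atTop f := isBoundedUnder_of ⟨1, fun m => h1 m⟩
  refine le_antisymm ?_ (le_liminf_of_le hub.isCoboundedUnder_ge (Eventually.of_forall h0))
  refine le_of_forall_pos_le_add fun ε hε => ?_
  simpa using liminf_le_of_frequently_le (hfreq ε hε) hbd

theorem stmt11 (a : ℕ → ℕ) (α β : ℕ → Bool) (hmono : StrictMono a) (hpos : ∀ n, 0 < a n)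
    (hratio : Tendsto (fun n => (a n : ℝ) / (a (n + 1) : ℝ)) atTop (nhds 0))
    (hne : α ≠ β) (hdiff : {j : ℕ | α j ≠ β j}.Infinite) :
    ∀ δ : ℝ, 0 < δ → δ < 1 → Phi (xpt a α) (xpt a β) δ = 0 := by
  classical
  intro δ hδ0 hδ1
  set x := xpt a α with hx
  set y := xpt a β with hy
  rw [Phi]
  apply liminf_zero_aux
  · intro m; positivity
  · intro m
    rcases Nat.eq_zero_or_pos m with hm | hm
    · simp [hm]
    · rw [div_le_one (by exact_mod_cast hm)]
      have h1 : ((Finset.Ioo 0 m).filter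
          (fun k => dist2 (shift^[k] x) (shift^[k] y) < δ)).card ≤ m := by
        calc _ ≤ (Finset.Ioo 0 m).card := Finset.card_filter_le _ _
          _ ≤ m := by rw [Nat.card_Ioo]; omega
      exact_mod_cast h1
  · intro ε hε
    rw [frequently_atTop]
    intro m₀
    -- N from δ
    obtain ⟨N, hN⟩ := exists_pow_lt_of_lt_one (show (0:ℝ) < 1 - δ by linarith)
      (by norm_num : (1/2:ℝ) < 1)
    -- D from ε
    obtain ⟨D, hD⟩ := exists_pow_lt_of_lt_one (show (0:ℝ) < ε/2 by linarith)
      (by norm_num : (1/2:ℝ) < 1)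
    -- gap
    obtain ⟨j₁, hj₁⟩ := eventually_atTop.mp (gap_lemma a hpos hratio (D+1))
    -- n₂ for N/2^n small
    obtain ⟨n₂, hn₂⟩ := pow_unbounded_of_one_lt ((N:ℝ)/(ε/2)) (by norm_num : (1:ℝ) < 2)
    -- pick j
    obtain ⟨j, hjmem, hjgt⟩ := hdiff.exists_gt (max (max j₁ n₂) m₀)
    have hj1 : j₁ < j := lt_of_le_of_lt (le_trans (le_max_left _ _) (le_max_left _ _)) hjgt
    have hjn2 : n₂ < j := lt_of_le_of_lt (le_trans (le_max_right _ _) (le_max_left _ _)) hjgt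
    have hjm0 : m₀ < j := lt_of_le_of_lt (le_max_right _ _) hjgt
    simp only [Set.mem_setOf_eq] at hjmem
    -- abbreviations
    set S : ℕ := ∑ i ∈ Finset.range (2*j), 2 ^ (a i) with hS
    set L : ℕ := 2 ^ (a (2*j)) with hL
    have hmeq : ∑ i ∈ Finset.range (2*j+1), 2 ^ (a i) = S + L := by
      rw [hS, hL, Finset.sum_range_succ]
    set m : ℕ := S + L with hmdef
    have hLpos : 0 < L := Nat.pow_pos (by norm_num)
    have hm0 : m₀ ≤ m := by
      have ha2j : 2*j ≤ a (2*j) := hmono.le_apply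
      have : 2*j < 2 ^ (a (2*j)) :=
        lt_of_lt_of_le Nat.lt_two_pow_self (Nat.pow_le_pow_right (by norm_num) ha2j)
      omega
    refine ⟨m, hm0, ?_⟩
    -- far positions
    have key : ∀ k, S ≤ k → k + N ≤ m → ¬ (dist2 (shift^[k] x) (shift^[k] y) < δ) := by
      intro k hk1 hk2 hlt
      have hge : 1 - (1/2:ℝ)^N ≤ dist2 (shift^[k] x) (shift^[k] y) := by
        apply dist2_ge
        intro t ht
        rw [shift_iter, shift_iter]
        exact xpt_ne a α β j (t+k) hjmem (by omega) (by rw [hmeq]; omega)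
      linarith
    -- card bound
    have hsub : (Finset.Ioo 0 m).filter (fun k => dist2 (shift^[k] x) (shift^[k] y) < δ)
        ⊆ Finset.range S ∪ Finset.Ioo (m - N) m := by
      intro k hk
      rw [Finset.mem_filter, Finset.mem_Ioo] at hk
      rw [Finset.mem_union, Finset.mem_range, Finset.mem_Ioo]
      by_contra hcon
      push_neg at hcon
      exact key k hcon.1 (by omega) hk.2
    have hcard : (((Finset.Ioo 0 m).filter
        (fun k => dist2 (shift^[k] x) (shift^[k] y) < δ)).card : ℝ) ≤ (S : ℝ) + N := by
      have := Finset.card_le_card hsub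
      have h2 := Finset.card_union_le (Finset.range S) (Finset.Ioo (m - N) m)
      rw [Finset.card_range, Nat.card_Ioo] at h2
      have h3 : m - (m - N) - 1 ≤ N := by omega
      have : (((Finset.Ioo 0 m).filter
          (fun k => dist2 (shift^[k] x) (shift^[k] y) < δ)).card : ℕ) ≤ S + N := by omega
      exact_mod_cast this
    -- numerator bound: S < 2^(a(2j-1)+1)
    have hj1' : 1 ≤ j := by omega
    have hSbd : S < 2 ^ (a (2*j-1) + 1) := by
      have := sum_pow_lt a hmono (2*j-1)
      have h2j : 2*j - 1 + 1 = 2*j := by omega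
      rw [h2j] at this
      exact this
    -- gap at 2j-1
    have hgap : a (2*j-1) + (D+1) ≤ a (2*j) := by
      have := hj₁ (2*j-1) (by omega)
      have h2j : 2*j - 1 + 1 = 2*j := by omega
      rwa [h2j] at this
    -- real bounds
    have hLr : (0:ℝ) < (L:ℝ) := by exact_mod_cast hLpos
    have hT1 : (S:ℝ) ≤ (ε/2) * L := by
      have hpow : (2:ℕ) ^ (a (2*j-1) + 1 + D) ≤ L := by
        rw [hL]; exact Nat.pow_le_pow_right (by norm_num) (by omega)
      have hS2 : (S:ℝ) ≤ (2:ℝ) ^ (a (2*j-1) + 1) := by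
        have : (S:ℝ) ≤ ((2 ^ (a (2*j-1) + 1) : ℕ) : ℝ) := by exact_mod_cast hSbd.le
        simpa using this
      have hpr : (2:ℝ) ^ (a (2*j-1) + 1) * 2 ^ D ≤ (L:ℝ) := by
        have : ((2 ^ (a (2*j-1) + 1 + D) : ℕ) : ℝ) ≤ (L:ℝ) := by exact_mod_cast hpow
        rw [pow_add] at this; push_cast at this; linarith
      have h2D : (0:ℝ) < 2 ^ D := by positivity
      have : (2:ℝ) ^ (a (2*j-1) + 1) ≤ (L:ℝ) * (1/2)^D := by
        rw [div_pow, one_pow, mul_one_div, le_div_iff₀ h2D]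
        linarith
      calc (S:ℝ) ≤ (2:ℝ) ^ (a (2*j-1) + 1) := hS2
        _ ≤ (L:ℝ) * (1/2)^D := this
        _ ≤ (ε/2) * L := by nlinarith
    have hT2 : (N:ℝ) ≤ (ε/2) * L := by
      have hmono2 : (2:ℝ) ^ n₂ ≤ (L:ℝ) := by
        have : (2:ℕ) ^ n₂ ≤ L := by
          rw [hL]; exact Nat.pow_le_pow_right (by norm_num)
            (le_trans (by omega) hmono.le_apply)
        exact_mod_cast this
      have : (N:ℝ)/(ε/2) < (L:ℝ) := lt_of_lt_of_le hn₂ hmono2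
      rw [div_lt_iff₀ (by linarith)] at this
      linarith
    -- final bound
    have hmr : (0:ℝ) < (m:ℝ) := by
      have : 0 < m := by omega
      exact_mod_cast this
    have hmL : (L:ℝ) ≤ (m:ℝ) := by
      have : L ≤ m := by omega
      exact_mod_cast this
    rw [div_le_iff₀ hmr]
    calc (((Finset.Ioo 0 m).filter
        (fun k => dist2 (shift^[k] x) (shift^[k] y) < δ)).card : ℝ)
        ≤ (S : ℝ) + N := hcard
      _ ≤ (ε/2) * L + (ε/2) * L := add_le_add hT1 hT2
      _ = ε * L := by ring
      _ ≤ ε * m := by nlinarith
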